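/- Let k₁, k₂, k₃, ε ∈ ℝ and set Δ₂ := k₂ − 2k₁ and Δ₃ := k₁² − k₁k₂ − k₃. Let I ⊆ ℝ be an open interval containing 0 and u : I → ℝ a twice continuously differentiable function with u > 0 on I, satisfying (1 + Δ₂ s² + Δ₃ s⁴) u''(s) = s(Δ₂ + Δ₃ s²) u'(s) on I, with u(0) = 1 and u'(0) = 2ε. Let J be an open interval containing 0 such that for all s ∈ J one has 1 + k₁ s² > 0 and s/√(1 + k₁ s²) ∈ I. Then the function φ(s) := √( (1 + k₁ s²) · u(s/√(1 + k₁ s²)) ) satisfies equation (E) with parameters (k₁, k₂, k₃) on J, and φ(0) = 1, φ'(0) = ε. -/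

import Mathlib

/-- Equation (E) with parameters `k₁ k₂ k₃` for a real function `φ` at the point `s`:
`s(k₂ − k₃ s²)(φφ' − s φ'² − s φφ'') − (φ'² + φφ'') + k₁ φ(φ − s φ') = 0`. -/
def eqE (k₁ k₂ k₃ : ℝ) (φ : ℝ → ℝ) (s : ℝ) : Prop :=
  s * (k₂ - k₃ * s ^ 2) *
      (φ s * deriv φ s - s * (deriv φ s) ^ 2 - s * φ s * deriv (deriv φ) s) -
    ((deriv φ s) ^ 2 + φ s * deriv (deriv φ) s) +
    k₁ * φ s * (φ s - s * deriv φ s) = 0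

lemma hasDerivAt_q (k₁ t : ℝ) (ht : 0 < 1 + k₁ * t ^ 2) :
    HasDerivAt (fun x => Real.sqrt (1 + k₁ * x ^ 2)) (k₁ * t / Real.sqrt (1 + k₁ * t ^ 2)) t := by
  have h1 : HasDerivAt (fun x : ℝ => 1 + k₁ * x ^ 2) (2 * k₁ * t) t := by
    simpa [mul_comm, mul_assoc, mul_left_comm] using ((hasDerivAt_pow 2 t).const_mul k₁).const_add 1
  have h2 := (Real.hasDerivAt_sqrt ht.ne').comp t h1
  have hs : Real.sqrt (1 + k₁ * t ^ 2) ≠ 0 := (Real.sqrt_pos.mpr ht).ne'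
  refine h2.congr_deriv ?_
  field_simp

lemma hasDerivAt_sigma (k₁ t : ℝ) (ht : 0 < 1 + k₁ * t ^ 2) :
    HasDerivAt (fun x => x / Real.sqrt (1 + k₁ * x ^ 2))
      (1 / ((1 + k₁ * t ^ 2) * Real.sqrt (1 + k₁ * t ^ 2))) t := by
  have hq0 : 0 < Real.sqrt (1 + k₁ * t ^ 2) := Real.sqrt_pos.mpr ht
  have hq2 : Real.sqrt (1 + k₁ * t ^ 2) ^ 2 = 1 + k₁ * t ^ 2 := Real.sq_sqrt ht.le
  have h := (hasDerivAt_id t).div (hasDerivAt_q k₁ t ht) hq0.ne'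
  refine h.congr_deriv ?_
  simp only [id]
  field_simp
  nlinarith [hq2, hq0]

lemma hasDerivAt_w (k₁ t : ℝ) (u : ℝ → ℝ) (u1 : ℝ) (ht : 0 < 1 + k₁ * t ^ 2)
    (hu' : HasDerivAt u u1 (t / Real.sqrt (1 + k₁ * t ^ 2))) :
    HasDerivAt (fun x => (1 + k₁ * x ^ 2) * u (x / Real.sqrt (1 + k₁ * x ^ 2)))
      (2 * k₁ * t * u (t / Real.sqrt (1 + k₁ * t ^ 2)) + u1 / Real.sqrt (1 + k₁ * t ^ 2)) t := by
  have hq0 : 0 < Real.sqrt (1 + k₁ * t ^ 2) := Real.sqrt_pos.mpr ht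
  have hq2 : Real.sqrt (1 + k₁ * t ^ 2) ^ 2 = 1 + k₁ * t ^ 2 := Real.sq_sqrt ht.le
  have h1 : HasDerivAt (fun x : ℝ => 1 + k₁ * x ^ 2) (2 * k₁ * t) t := by
    simpa [mul_comm, mul_assoc, mul_left_comm] using ((hasDerivAt_pow 2 t).const_mul k₁).const_add 1
  have h2 := hu'.comp t (hasDerivAt_sigma k₁ t ht)
  have h := h1.mul h2
  refine h.congr_deriv ?_
  simp only [Function.comp_apply]
  field_simp

lemma hasDerivAt_w1 (k₁ t : ℝ) (u : ℝ → ℝ) (u2 : ℝ) (ht : 0 < 1 + k₁ * t ^ 2)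
    (hu' : HasDerivAt u (deriv u (t / Real.sqrt (1 + k₁ * t ^ 2))) (t / Real.sqrt (1 + k₁ * t ^ 2)))
    (hu'' : HasDerivAt (deriv u) u2 (t / Real.sqrt (1 + k₁ * t ^ 2))) :
    HasDerivAt (fun x => 2 * k₁ * x * u (x / Real.sqrt (1 + k₁ * x ^ 2))
        + deriv u (x / Real.sqrt (1 + k₁ * x ^ 2)) / Real.sqrt (1 + k₁ * x ^ 2))
      (2 * k₁ * u (t / Real.sqrt (1 + k₁ * t ^ 2))
        + k₁ * t * deriv u (t / Real.sqrt (1 + k₁ * t ^ 2))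
            / ((1 + k₁ * t ^ 2) * Real.sqrt (1 + k₁ * t ^ 2))
        + u2 / (1 + k₁ * t ^ 2) ^ 2) t := by
  have hq0 : 0 < Real.sqrt (1 + k₁ * t ^ 2) := Real.sqrt_pos.mpr ht
  have hq2 : Real.sqrt (1 + k₁ * t ^ 2) ^ 2 = 1 + k₁ * t ^ 2 := Real.sq_sqrt ht.le
  have hσ := hasDerivAt_sigma k₁ t ht
  have hA : HasDerivAt (fun x : ℝ => 2 * k₁ * x) (2 * k₁) t := by
    simpa using (hasDerivAt_id t).const_mul (2 * k₁)
  have h1 := hA.mul (hu'.comp t hσ)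
  have h2 := ((hu''.comp t hσ).div (hasDerivAt_q k₁ t ht) hq0.ne')
  have h := h1.add h2
  refine h.congr_deriv ?_
  simp only [Function.comp_apply]
  field_simp
  linear_combination (2 * k₁ * (1 + k₁ * t ^ 2) * ((1 + k₁ * t ^ 2) * √(1 + k₁ * t ^ 2) * u (t / √(1 + k₁ * t ^ 2)) + t * deriv u (t / √(1 + k₁ * t ^ 2))) - (k₁ * (1 + k₁ * t ^ 2) * (2 * (1 + k₁ * t ^ 2) * √(1 + k₁ * t ^ 2) * u (t / √(1 + k₁ * t ^ 2)) + t * deriv u (t / √(1 + k₁ * t ^ 2))) + √(1 + k₁ * t ^ 2) * u2)) * hq2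

lemma hasDerivAt_phi (w : ℝ → ℝ) (W1 t : ℝ) (hw : HasDerivAt w W1 t) (hwpos : 0 < w t) :
    HasDerivAt (fun x => Real.sqrt (w x)) (W1 / (2 * Real.sqrt (w t))) t := by
  have h := (Real.hasDerivAt_sqrt hwpos.ne').comp t hw
  refine h.congr_deriv ?_
  ring

lemma hasDerivAt_g (w w1 : ℝ → ℝ) (W2 t : ℝ) (hw : HasDerivAt w (w1 t) t)
    (hw1 : HasDerivAt w1 W2 t) (hwpos : 0 < w t) :
    HasDerivAt (fun x => w1 x / (2 * Real.sqrt (w x)))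
      (W2 / (2 * Real.sqrt (w t)) - (w1 t) ^ 2 / (4 * w t * Real.sqrt (w t))) t := by
  have hq0 : 0 < Real.sqrt (w t) := Real.sqrt_pos.mpr hwpos
  have hq2 : Real.sqrt (w t) ^ 2 = w t := Real.sq_sqrt hwpos.le
  have hden : HasDerivAt (fun x => 2 * Real.sqrt (w x)) (2 * ((w1 t) / (2 * Real.sqrt (w t)))) t := by
    have h := (Real.hasDerivAt_sqrt hwpos.ne').comp t hw
    have h2 := h.const_mul 2
    refine h2.congr_deriv ?_
    ring
  have h := hw1.div hden (by positivity)
  refine h.congr_deriv ?_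
  field_simp
  linear_combination (4 * w1 t ^ 2) * hq2

lemma key0 (k₁ k₂ k₃ s v V v'' : ℝ) (hp : 0 < 1 + k₁ * s ^ 2)
    (hODE : (1 + (k₂ - 2 * k₁) * (s ^ 2 / (1 + k₁ * s ^ 2))
        + (k₁ ^ 2 - k₁ * k₂ - k₃) * (s ^ 4 / (1 + k₁ * s ^ 2) ^ 2)) * v''
      = ((k₂ - 2 * k₁) + (k₁ ^ 2 - k₁ * k₂ - k₃) * (s ^ 2 / (1 + k₁ * s ^ 2))) * (s * V)) :
    s * (k₂ - k₃ * s ^ 2) *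
        ((2 * k₁ * s * v + V)
          - s * (2 * k₁ * v + k₁ * s * V / (1 + k₁ * s ^ 2) + v'' / (1 + k₁ * s ^ 2) ^ 2))
      - (2 * k₁ * v + k₁ * s * V / (1 + k₁ * s ^ 2) + v'' / (1 + k₁ * s ^ 2) ^ 2)
      + k₁ * (2 * ((1 + k₁ * s ^ 2) * v) - s * (2 * k₁ * s * v + V)) = 0 := by
  have hp' : (1 + k₁ * s ^ 2) ≠ 0 := hp.ne'
  have hp2 : 1 + s ^ 2 * k₁ ≠ 0 := by rw [mul_comm]; exact hp'
  have hLR : (1 + k₂ * s ^ 2 - k₃ * s ^ 4) * v''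
      = s * (1 + k₁ * s ^ 2) * ((k₂ - 2 * k₁) * (1 + k₁ * s ^ 2)
          + (k₁ ^ 2 - k₁ * k₂ - k₃) * s ^ 2) * V := by
    have h := congrArg (fun X => (1 + k₁ * s ^ 2) ^ 2 * X) hODE
    calc (1 + k₂ * s ^ 2 - k₃ * s ^ 4) * v''
        = (1 + k₁ * s ^ 2) ^ 2 * ((1 + (k₂ - 2 * k₁) * (s ^ 2 / (1 + k₁ * s ^ 2))
            + (k₁ ^ 2 - k₁ * k₂ - k₃) * (s ^ 4 / (1 + k₁ * s ^ 2) ^ 2)) * v'') := by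
          field_simp; ring
      _ = (1 + k₁ * s ^ 2) ^ 2 * (((k₂ - 2 * k₁) + (k₁ ^ 2 - k₁ * k₂ - k₃)
            * (s ^ 2 / (1 + k₁ * s ^ 2))) * (s * V)) := h
      _ = s * (1 + k₁ * s ^ 2) * ((k₂ - 2 * k₁) * (1 + k₁ * s ^ 2)
            + (k₁ ^ 2 - k₁ * k₂ - k₃) * s ^ 2) * V := by field_simp
  field_simp
  linear_combination (-1) * hLR


lemma reduce (k₁ k₂ k₃ s W W1 W2 R : ℝ) (hR0 : 0 < R) (hR : R ^ 2 = W)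
    (hkey : s * (k₂ - k₃ * s ^ 2) * (W1 - s * W2) - W2 + k₁ * (2 * W - s * W1) = 0) :
    s * (k₂ - k₃ * s ^ 2) *
        (R * (W1 / (2 * R)) - s * (W1 / (2 * R)) ^ 2
          - s * R * (W2 / (2 * R) - W1 ^ 2 / (4 * W * R)))
      - ((W1 / (2 * R)) ^ 2 + R * (W2 / (2 * R) - W1 ^ 2 / (4 * W * R)))
      + k₁ * R * (R - s * (W1 / (2 * R))) = 0 := by
  subst hR
  have hR' : R ≠ 0 := hR0.ne'
  field_simp
  linear_combination (8*R^2) * hkey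

theorem stmt10 (k₁ k₂ k₃ ε : ℝ) (a b : ℝ) (ha : a < 0) (hb : 0 < b)
    (u : ℝ → ℝ)
    (hupos : ∀ s ∈ Set.Ioo a b, 0 < u s)
    (huC2 : ContDiffOn ℝ 2 u (Set.Ioo a b))
    (huE : ∀ s ∈ Set.Ioo a b,
      (1 + (k₂ - 2 * k₁) * s ^ 2 + (k₁ ^ 2 - k₁ * k₂ - k₃) * s ^ 4) * deriv (deriv u) s
        = s * ((k₂ - 2 * k₁) + (k₁ ^ 2 - k₁ * k₂ - k₃) * s ^ 2) * deriv u s)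
    (hu0 : u 0 = 1) (hu0' : deriv u 0 = 2 * ε)
    (c d : ℝ) (hc : c < 0) (hd : 0 < d)
    (hJ : ∀ s ∈ Set.Ioo c d, 0 < 1 + k₁ * s ^ 2 ∧
      s / Real.sqrt (1 + k₁ * s ^ 2) ∈ Set.Ioo a b) :
    (∀ s ∈ Set.Ioo c d,
      eqE k₁ k₂ k₃
        (fun t => Real.sqrt ((1 + k₁ * t ^ 2) * u (t / Real.sqrt (1 + k₁ * t ^ 2)))) s) ∧
    (fun t => Real.sqrt ((1 + k₁ * t ^ 2) * u (t / Real.sqrt (1 + k₁ * t ^ 2)))) 0 = 1 ∧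
    deriv (fun t => Real.sqrt ((1 + k₁ * t ^ 2) * u (t / Real.sqrt (1 + k₁ * t ^ 2)))) 0
      = ε := by
  -- basic differentiability facts for u
  have hu_diff : ∀ x ∈ Set.Ioo a b, HasDerivAt u (deriv u x) x := fun x hx =>
    ((huC2.differentiableOn (by norm_num)).differentiableAt
      (isOpen_Ioo.mem_nhds hx)).hasDerivAt
  have hduC1 : ContDiffOn ℝ 1 (deriv u) (Set.Ioo a b) :=
    huC2.deriv_of_isOpen isOpen_Ioo (by norm_num)
  have hdu_diff : ∀ x ∈ Set.Ioo a b, HasDerivAt (deriv u) (deriv (deriv u) x) x := fun x hx =>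
    ((hduC1.differentiableOn (by norm_num)).differentiableAt
      (isOpen_Ioo.mem_nhds hx)).hasDerivAt
  have hwpos : ∀ t ∈ Set.Ioo c d,
      0 < (1 + k₁ * t ^ 2) * u (t / Real.sqrt (1 + k₁ * t ^ 2)) := fun t ht =>
    mul_pos (hJ t ht).1 (hupos _ (hJ t ht).2)
  -- first derivative formula on (c,d)
  have hD1 : ∀ t ∈ Set.Ioo c d,
      deriv (fun x => Real.sqrt ((1 + k₁ * x ^ 2) * u (x / Real.sqrt (1 + k₁ * x ^ 2)))) t
        = (2 * k₁ * t * u (t / Real.sqrt (1 + k₁ * t ^ 2))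
            + deriv u (t / Real.sqrt (1 + k₁ * t ^ 2)) / Real.sqrt (1 + k₁ * t ^ 2))
          / (2 * Real.sqrt ((1 + k₁ * t ^ 2) * u (t / Real.sqrt (1 + k₁ * t ^ 2)))) := by
    intro t ht
    exact (hasDerivAt_phi (fun x => (1 + k₁ * x ^ 2) * u (x / Real.sqrt (1 + k₁ * x ^ 2))) _ t
      (hasDerivAt_w k₁ t u _ (hJ t ht).1 (hu_diff _ (hJ t ht).2)) (hwpos t ht)).deriv
  refine ⟨?_, ?_, ?_⟩
  · intro s hs
    obtain ⟨hps, hσs⟩ := hJ s hs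
    have hQ0 : 0 < Real.sqrt (1 + k₁ * s ^ 2) := Real.sqrt_pos.mpr hps
    have hQ2 : Real.sqrt (1 + k₁ * s ^ 2) ^ 2 = 1 + k₁ * s ^ 2 := Real.sq_sqrt hps.le
    have hws := hwpos s hs
    -- second derivative formula at s
    have hEV : deriv (fun x => Real.sqrt ((1 + k₁ * x ^ 2) * u (x / Real.sqrt (1 + k₁ * x ^ 2))))
        =ᶠ[nhds s] fun x =>
          (2 * k₁ * x * u (x / Real.sqrt (1 + k₁ * x ^ 2))
            + deriv u (x / Real.sqrt (1 + k₁ * x ^ 2)) / Real.sqrt (1 + k₁ * x ^ 2))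
          / (2 * Real.sqrt ((1 + k₁ * x ^ 2) * u (x / Real.sqrt (1 + k₁ * x ^ 2)))) :=
      Filter.eventuallyEq_of_mem (isOpen_Ioo.mem_nhds hs) hD1
    have hDD : deriv (deriv
          (fun x => Real.sqrt ((1 + k₁ * x ^ 2) * u (x / Real.sqrt (1 + k₁ * x ^ 2))))) s
        = (2 * k₁ * u (s / Real.sqrt (1 + k₁ * s ^ 2))
            + k₁ * s * deriv u (s / Real.sqrt (1 + k₁ * s ^ 2))
                / ((1 + k₁ * s ^ 2) * Real.sqrt (1 + k₁ * s ^ 2))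
            + deriv (deriv u) (s / Real.sqrt (1 + k₁ * s ^ 2)) / (1 + k₁ * s ^ 2) ^ 2)
            / (2 * Real.sqrt ((1 + k₁ * s ^ 2) * u (s / Real.sqrt (1 + k₁ * s ^ 2))))
          - (2 * k₁ * s * u (s / Real.sqrt (1 + k₁ * s ^ 2))
              + deriv u (s / Real.sqrt (1 + k₁ * s ^ 2)) / Real.sqrt (1 + k₁ * s ^ 2)) ^ 2
            / (4 * ((1 + k₁ * s ^ 2) * u (s / Real.sqrt (1 + k₁ * s ^ 2)))
                * Real.sqrt ((1 + k₁ * s ^ 2) * u (s / Real.sqrt (1 + k₁ * s ^ 2)))) := by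
      rw [hEV.deriv_eq]
      exact (hasDerivAt_g
        (fun x => (1 + k₁ * x ^ 2) * u (x / Real.sqrt (1 + k₁ * x ^ 2)))
        (fun x => 2 * k₁ * x * u (x / Real.sqrt (1 + k₁ * x ^ 2))
            + deriv u (x / Real.sqrt (1 + k₁ * x ^ 2)) / Real.sqrt (1 + k₁ * x ^ 2))
        _ s
        (hasDerivAt_w k₁ s u _ hps (hu_diff _ hσs))
        (hasDerivAt_w1 k₁ s u _ hps (hu_diff _ hσs) (hdu_diff _ hσs))
        hws).deriv
    -- the ODE at σ s, rewritten
    have hODE := huE _ hσs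
    have e2 : (s / Real.sqrt (1 + k₁ * s ^ 2)) ^ 2 = s ^ 2 / (1 + k₁ * s ^ 2) := by
      rw [div_pow, hQ2]
    have e4 : (s / Real.sqrt (1 + k₁ * s ^ 2)) ^ 4 = s ^ 4 / (1 + k₁ * s ^ 2) ^ 2 := by
      rw [div_pow, show Real.sqrt (1 + k₁ * s ^ 2) ^ 4
        = (Real.sqrt (1 + k₁ * s ^ 2) ^ 2) ^ 2 by ring, hQ2]
    have hODE0 : (1 + (k₂ - 2 * k₁) * (s ^ 2 / (1 + k₁ * s ^ 2))
        + (k₁ ^ 2 - k₁ * k₂ - k₃) * (s ^ 4 / (1 + k₁ * s ^ 2) ^ 2))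
          * deriv (deriv u) (s / Real.sqrt (1 + k₁ * s ^ 2))
      = ((k₂ - 2 * k₁) + (k₁ ^ 2 - k₁ * k₂ - k₃) * (s ^ 2 / (1 + k₁ * s ^ 2)))
          * (s * (deriv u (s / Real.sqrt (1 + k₁ * s ^ 2)) / Real.sqrt (1 + k₁ * s ^ 2))) := by
      rw [← e2, ← e4]
      linear_combination hODE
    have halg := key0 k₁ k₂ k₃ s (u (s / Real.sqrt (1 + k₁ * s ^ 2)))
      (deriv u (s / Real.sqrt (1 + k₁ * s ^ 2)) / Real.sqrt (1 + k₁ * s ^ 2))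
      (deriv (deriv u) (s / Real.sqrt (1 + k₁ * s ^ 2))) hps hODE0
    have halg' : s * (k₂ - k₃ * s ^ 2) *
        ((2 * k₁ * s * u (s / Real.sqrt (1 + k₁ * s ^ 2))
            + deriv u (s / Real.sqrt (1 + k₁ * s ^ 2)) / Real.sqrt (1 + k₁ * s ^ 2))
          - s * (2 * k₁ * u (s / Real.sqrt (1 + k₁ * s ^ 2))
              + k₁ * s * deriv u (s / Real.sqrt (1 + k₁ * s ^ 2))
                  / ((1 + k₁ * s ^ 2) * Real.sqrt (1 + k₁ * s ^ 2))
              + deriv (deriv u) (s / Real.sqrt (1 + k₁ * s ^ 2)) / (1 + k₁ * s ^ 2) ^ 2))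
      - (2 * k₁ * u (s / Real.sqrt (1 + k₁ * s ^ 2))
          + k₁ * s * deriv u (s / Real.sqrt (1 + k₁ * s ^ 2))
              / ((1 + k₁ * s ^ 2) * Real.sqrt (1 + k₁ * s ^ 2))
          + deriv (deriv u) (s / Real.sqrt (1 + k₁ * s ^ 2)) / (1 + k₁ * s ^ 2) ^ 2)
      + k₁ * (2 * ((1 + k₁ * s ^ 2) * u (s / Real.sqrt (1 + k₁ * s ^ 2)))
          - s * (2 * k₁ * s * u (s / Real.sqrt (1 + k₁ * s ^ 2))
              + deriv u (s / Real.sqrt (1 + k₁ * s ^ 2)) / Real.sqrt (1 + k₁ * s ^ 2)))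
        = 0 := by
      have hterm : k₁ * s * (deriv u (s / Real.sqrt (1 + k₁ * s ^ 2))
            / Real.sqrt (1 + k₁ * s ^ 2)) / (1 + k₁ * s ^ 2)
          = k₁ * s * deriv u (s / Real.sqrt (1 + k₁ * s ^ 2))
            / ((1 + k₁ * s ^ 2) * Real.sqrt (1 + k₁ * s ^ 2)) := by
        field_simp
      rw [hterm] at halg
      linear_combination halg
    have hR2 : Real.sqrt ((1 + k₁ * s ^ 2) * u (s / Real.sqrt (1 + k₁ * s ^ 2))) ^ 2
        = (1 + k₁ * s ^ 2) * u (s / Real.sqrt (1 + k₁ * s ^ 2)) := Real.sq_sqrt hws.le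
    have hR0 : 0 < Real.sqrt ((1 + k₁ * s ^ 2) * u (s / Real.sqrt (1 + k₁ * s ^ 2))) :=
      Real.sqrt_pos.mpr hws
    simp only [eqE]
    rw [hD1 s hs, hDD]
    exact reduce k₁ k₂ k₃ s _ _ _ _ hR0 hR2 halg'
  · show Real.sqrt ((1 + k₁ * 0 ^ 2) * u (0 / Real.sqrt (1 + k₁ * 0 ^ 2))) = 1
    norm_num [hu0]
  · have h0 : (0 : ℝ) ∈ Set.Ioo c d := ⟨hc, hd⟩
    rw [hD1 0 h0]
    norm_num [hu0, hu0']
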